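/- Let $\tilde m : \mathbb{R} \to \mathbb{R}_+$ be nondecreasing, right-continuous, with $\tilde m(u) = 0$ for $u < 0$, left-continuous as a function of the shift in the sense that for each $u$, $s \mapsto \tilde m(u - s)$ is left-continuous in $s$. Let $Z$ be a bounded continuous function on $[t,T]$. Then the map $s \mapsto \int_t^T Z(u) \, d_u \tilde m(u - s)$ (Lebesgue–Stieltjes integral in $u$) is left-continuous and bounded on $[0,T]$. -/

import Mathlib

open MeasureTheory Set Filter

/-- regularity of `s ↦ ∫_t^T Z(u) d_u m̃(u-s)`: for a nondecreasing
right-continuous `m̃` vanishing on `(-∞,0)` whose shifts are left-continuous in `s`,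
and `Z` bounded continuous on `[t,T]`, the map is left-continuous and bounded on `[0,T]`
(with bound `sup|Z| ⬝ m̃(T)`). -/
theorem shifted_stieltjes_integral_leftContinuous_and_bounded
    (t T : ℝ) (ht : 0 ≤ t) (htT : t ≤ T)
    (ms : StieltjesFunction ℝ) (hmsnn : ∀ u : ℝ, 0 ≤ ms u)
    (hmsneg : ∀ u : ℝ, u < 0 → ms u = 0)
    (hshiftlc : ∀ u s : ℝ, ContinuousWithinAt (fun v => ms (u - v)) (Set.Iio s) s)
    (Z : ℝ → ℝ) (hZcont : ContinuousOn Z (Set.Icc t T))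
    (M : ℝ) (hZbd : ∀ u ∈ Set.Icc t T, |Z u| ≤ M) :
    (∀ s ∈ Set.Icc (0:ℝ) T,
      ContinuousWithinAt
        (fun s' => ∫ u in Set.Ioc t T, Z u ∂(Measure.map (fun x => x + s') ms.measure))
        (Set.Iio s) s)
    ∧ ∀ s ∈ Set.Icc (0:ℝ) T,
        |∫ u in Set.Ioc t T, Z u ∂(Measure.map (fun x => x + s) ms.measure)| ≤ M * ms T := by
  have hM : 0 ≤ M := le_trans (abs_nonneg _) (hZbd t ⟨le_refl t, htT⟩)
  -- clamped continuous extension of Z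
  set Zc : ℝ → ℝ := fun u => Z (min T (max t u)) with hZc
  have hclamp : ∀ u ∈ Set.Icc t T, min T (max t u) = u := by
    intro u hu
    rw [max_eq_right hu.1, min_eq_right hu.2]
  have hmem : ∀ u : ℝ, min T (max t u) ∈ Set.Icc t T := by
    intro u
    constructor
    · exact le_min htT (le_max_left _ _)
    · exact min_le_left _ _
  have hZcc : Continuous Zc := by
    apply hZcont.comp_continuous
    · exact continuous_const.min (continuous_const.max continuous_id)
    · exact hmem
  have hZceq : ∀ u ∈ Set.Icc t T, Zc u = Z u := fun u hu => by
    simp only [hZc, hclamp u hu]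
  have hZcbd : ∀ u : ℝ, |Zc u| ≤ M := fun u => hZbd _ (hmem u)
  -- rewrite the integral
  have hkey : ∀ s' : ℝ,
      (∫ u in Set.Ioc t T, Z u ∂(Measure.map (fun x => x + s') ms.measure))
        = ∫ x, (Set.Ioc (t - s') (T - s')).indicator (fun x => Zc (x + s')) x ∂ms.measure := by
    intro s'
    rw [(measurableEmbedding_addRight s').setIntegral_map]
    rw [Set.preimage_add_const_Ioc]
    rw [← integral_indicator measurableSet_Ioc]
    congr 1
    ext x
    by_cases hx : x ∈ Set.Ioc (t - s') (T - s')
    · rw [Set.indicator_of_mem hx, Set.indicator_of_mem hx]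
      refine (hZceq _ ?_).symm
      constructor
      · linarith [hx.1]
      · linarith [hx.2]
    · rw [Set.indicator_of_notMem hx, Set.indicator_of_notMem hx]
  constructor
  · -- left-continuity
    intro s hs
    have hIoc_fin : ms.measure (Set.Ioc (t - s - 1) (T - s + 1)) < ⊤ := by
      rw [ms.measure_Ioc]
      exact ENNReal.ofReal_lt_top
    have hconv :
        Filter.Tendsto
          (fun s' => ∫ x, (Set.Ioc (t - s') (T - s')).indicator (fun x => Zc (x + s')) x ∂ms.measure)
          (nhdsWithin s (Set.Iio s))
          (nhds (∫ x, (Set.Ioc (t - s) (T - s)).indicator (fun x => Zc (x + s)) x ∂ms.measure)) := by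
      apply tendsto_integral_filter_of_dominated_convergence
        ((Set.Ioc (t - s - 1) (T - s + 1)).indicator (fun _ => M))
      · -- measurability
        filter_upwards with s'
        exact ((hZcc.comp (continuous_add_right s')).stronglyMeasurable.indicator
          measurableSet_Ioc).aestronglyMeasurable
      · -- bound
        have hev : ∀ᶠ s' in nhdsWithin s (Set.Iio s), s' ∈ Set.Ioo (s - 1) s := by
          apply Filter.eventually_inf_principal.2
          filter_upwards [Ioo_mem_nhds (by linarith : s - 1 < s) (by linarith : s < s + 1)]
            with s' hs' hlt
          exact ⟨hs'.1, hlt⟩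
        filter_upwards [hev] with s' hs'
        filter_upwards with x
        by_cases hx : x ∈ Set.Ioc (t - s') (T - s')
        · have hx2 : x ∈ Set.Ioc (t - s - 1) (T - s + 1) := by
            constructor
            · linarith [hx.1, hs'.2]
            · linarith [hx.2, hs'.1]
          rw [Set.indicator_of_mem hx, Set.indicator_of_mem hx2]
          exact (Real.norm_eq_abs _) ▸ hZcbd _
        · rw [Set.indicator_of_notMem hx]
          simp only [norm_zero]
          exact Set.indicator_nonneg (fun _ _ => hM) x
      · -- integrability of the bound
        rw [integrable_indicator_iff measurableSet_Ioc]
        exact integrableOn_const hIoc_fin.ne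
      · -- pointwise convergence
        filter_upwards with x
        by_cases hx : x ∈ Set.Ioc (t - s) (T - s)
        · -- eventually the indicator equals 1 and Zc (x + s') → Zc (x + s)
          have hev : ∀ᶠ s' in nhdsWithin s (Set.Iio s), x ∈ Set.Ioc (t - s') (T - s') := by
            apply Filter.eventually_inf_principal.2
            have h1 : t - x < s := by linarith [hx.1]
            filter_upwards [Ioi_mem_nhds h1] with s' hs' hlt
            constructor
            · linarith [Set.mem_Ioi.1 hs']
            · have : s ≤ T - x := by linarith [hx.2]
              linarith [Set.mem_Iio.1 hlt]
          have htend : Filter.Tendsto (fun s' => Zc (x + s')) (nhdsWithin s (Set.Iio s))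
              (nhds (Zc (x + s))) := by
            exact ((hZcc.comp (continuous_add_left x)).continuousAt.continuousWithinAt).tendsto
          rw [Set.indicator_of_mem hx]
          refine Filter.Tendsto.congr' ?_ htend
          filter_upwards [hev] with s' hs'
          rw [Set.indicator_of_mem hs']
        · -- eventually the indicator is 0
          rw [Set.indicator_of_notMem hx]
          have hev : ∀ᶠ s' in nhdsWithin s (Set.Iio s), x ∉ Set.Ioc (t - s') (T - s') := by
            have hx' : x ≤ t - s ∨ T - s < x := by
              by_contra hcon
              push_neg at hcon
              exact hx ⟨hcon.1, hcon.2⟩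
            rcases hx' with h | h
            · -- x ≤ t - s : for all s' < s, x ≤ t - s < t - s'
              apply Filter.eventually_inf_principal.2
              filter_upwards with s' hlt
              intro hmem'
              have := hmem'.1
              have : s' < s := Set.mem_Iio.1 hlt
              linarith [hmem'.1]
            · -- T - s < x : eventually s' > T - x, so T - s' < x
              apply Filter.eventually_inf_principal.2
              have h1 : T - x < s := by linarith
              filter_upwards [Ioi_mem_nhds h1] with s' hs' hlt
              intro hmem'
              have := hmem'.2
              linarith [Set.mem_Ioi.1 hs']
          refine Filter.Tendsto.congr' ?_ tendsto_const_nhds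
          filter_upwards [hev] with s' hs'
          rw [Set.indicator_of_notMem hs']
    have : ContinuousWithinAt
        (fun s' => ∫ x, (Set.Ioc (t - s') (T - s')).indicator (fun x => Zc (x + s')) x ∂ms.measure)
        (Set.Iio s) s := hconv
    unfold ContinuousWithinAt
    simp only [hkey]
    exact hconv
  · -- boundedness
    intro s hs
    rw [hkey s, integral_indicator measurableSet_Ioc]
    have hfin : ms.measure (Set.Ioc (t - s) (T - s)) < ⊤ := by
      rw [ms.measure_Ioc]; exact ENNReal.ofReal_lt_top
    have hb := norm_setIntegral_le_of_norm_le_const (μ := ms.measure)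
      (s := Set.Ioc (t - s) (T - s)) (f := fun x => Zc (x + s)) hfin
      (fun x _ => (Real.norm_eq_abs _) ▸ hZcbd _)
    rw [Real.norm_eq_abs] at hb
    refine hb.trans ?_
    apply mul_le_mul_of_nonneg_left ?_ hM
    have hmono : ms (t - s) ≤ ms (T - s) := ms.mono (by linarith)
    rw [measureReal_def, ms.measure_Ioc, ENNReal.toReal_ofReal (by linarith)]
    have h1 : 0 ≤ ms (t - s) := hmsnn _
    have h2 : ms (T - s) ≤ ms T := ms.mono (by linarith [hs.1])
    linarith
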